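/- Let H be a finite group, N a subgroup of the center of H, g : H → H' = H/N the canonical projection, and ψ : H → Γ' a homomorphism into an abelian group Γ'. Suppose ker g ∩ ker ψ = {e}. Then the minimal index of an abelian subgroup of H equals the minimal index of an abelian subgroup of H'. -/

import Mathlib

open scoped commutatorElement

theorem stmt_8 {H : Type*} [Group H] [Finite H] (N : Subgroup H) [N.Normal]
    (hN : N ≤ Subgroup.center H)
    {Γ' : Type*} [CommGroup Γ'] (ψ : H →* Γ')
    (hker : (QuotientGroup.mk' N).ker ⊓ ψ.ker = ⊥) :
    sInf {k : ℕ | ∃ A : Subgroup H, IsMulCommutative A ∧ A.index = k} =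
      sInf {k : ℕ | ∃ A' : Subgroup (H ⧸ N), IsMulCommutative A' ∧ A'.index = k} := by
  set g := QuotientGroup.mk' N with hg
  have hsurj : Function.Surjective g := QuotientGroup.mk'_surjective N
  -- the comap of a commutative subgroup is commutative
  have hcomap : ∀ A' : Subgroup (H ⧸ N), IsMulCommutative A' →
      IsMulCommutative (A'.comap g) := by
    intro A' hA'
    refine ⟨⟨fun a b => ?_⟩⟩
    refine Subtype.ext ?_
    have hmem : ⁅(a : H), (b : H)⁆ ∈ (QuotientGroup.mk' N).ker ⊓ ψ.ker := by
      have h1 : ⁅(a : H), (b : H)⁆ ∈ (QuotientGroup.mk' N).ker := by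
        have hcomm := hA'.is_comm.comm ⟨g a, a.2⟩ ⟨g b, b.2⟩
        have heq : g a * g b = g b * g a := congrArg Subtype.val hcomm
        rw [MonoidHom.mem_ker, commutatorElement_def]
        simp only [map_mul, map_inv]
        rw [show ((QuotientGroup.mk' N) : H →* H ⧸ N) = g from rfl, heq]
        group
      have h2 : ⁅(a : H), (b : H)⁆ ∈ ψ.ker := by
        rw [MonoidHom.mem_ker, commutatorElement_def]
        simp only [map_mul, map_inv]
        rw [mul_comm (ψ (a : H)) (ψ (b : H))]
        group
      exact Subgroup.mem_inf.mpr ⟨h1, h2⟩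
    rw [hker, Subgroup.mem_bot] at hmem
    exact commutatorElement_eq_one_iff_mul_comm.mp hmem
  -- both sets are nonempty
  have hS : Set.Nonempty {k : ℕ | ∃ A : Subgroup H, IsMulCommutative A ∧ A.index = k} :=
    ⟨(⊥ : Subgroup H).index, ⊥, ⟨⟨fun a b => by ext; simp [Subgroup.mem_bot.mp a.2, Subgroup.mem_bot.mp b.2]⟩⟩, rfl⟩
  have hT : Set.Nonempty {k : ℕ | ∃ A' : Subgroup (H ⧸ N), IsMulCommutative A' ∧ A'.index = k} :=
    ⟨(⊥ : Subgroup (H ⧸ N)).index, ⊥, ⟨⟨fun a b => by ext; simp [Subgroup.mem_bot.mp a.2, Subgroup.mem_bot.mp b.2]⟩⟩, rfl⟩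
  apply le_antisymm
  · -- every element of the right set lies in the left set via comap
    obtain ⟨A', hA', hidx⟩ := Nat.sInf_mem hT
    refine Nat.sInf_le ⟨A'.comap g, hcomap A' hA', ?_⟩
    rw [Subgroup.index_comap_of_surjective A' hsurj, hidx]
  · obtain ⟨A, hA, hidx⟩ := Nat.sInf_mem hS
    haveI := hA
    have hmapcomm : IsMulCommutative (A.map g) := A.map_isMulCommutative g
    have hdvd : (A.map g).index ∣ A.index := by
      have : A ≤ (A.map g).comap g := Subgroup.le_comap_map g A
      rw [← Subgroup.index_comap_of_surjective (A.map g) hsurj]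
      exact Subgroup.index_dvd_of_le this
    have hpos : A.index ≠ 0 := Subgroup.index_ne_zero_of_finite
    calc sInf {k : ℕ | ∃ A' : Subgroup (H ⧸ N), IsMulCommutative A' ∧ A'.index = k}
        ≤ (A.map g).index := Nat.sInf_le ⟨A.map g, hmapcomm, rfl⟩
      _ ≤ A.index := Nat.le_of_dvd (Nat.pos_of_ne_zero hpos) hdvd
      _ = sInf _ := hidx
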